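/- Let f : ℝⁿ → ℝⁿ be everywhere differentiable with Df(x) invertible for every x. Then f is topologically derivable with respect to the directional refinement: for every x ∈ ℝⁿ and every unit vector u, the pushforward f*μ_{x,u} equals μ_{f(x),v}, where v = Df(x)u/‖Df(x)u‖. -/

import Mathlib

open Filter

/-- The directional filter μ_{x,u}, generated by the truncated cones
V⁺(x,u,ε,σ). -/
noncomputable def dirFilter {n : ℕ} (x u : EuclideanSpace ℝ (Fin n)) :
    Filter (EuclideanSpace ℝ (Fin n)) :=
  Filter.generate {V | ∃ ε > (0:ℝ), ∃ σ ∈ Set.Ioo (0:ℝ) 1,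
    V = {y | y ≠ x ∧
      Metric.infDist (y - x) ((fun t : ℝ => t • u) '' Set.Icc 0 ε) < σ * ‖y - x‖}}

section Aux

open Metric Set

variable {n : ℕ}

/-- Truncated cone. -/
def dirCone (x u : EuclideanSpace ℝ (Fin n)) (ε σ : ℝ) : Set (EuclideanSpace ℝ (Fin n)) :=
  {y | y ≠ x ∧
    Metric.infDist (y - x) ((fun t : ℝ => t • u) '' Set.Icc 0 ε) < σ * ‖y - x‖}

lemma mem_dirCone_iff {x u y : EuclideanSpace ℝ (Fin n)} {ε σ : ℝ} (hε : 0 ≤ ε) :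
    y ∈ dirCone x u ε σ ↔
      y ≠ x ∧ ∃ t, 0 ≤ t ∧ t ≤ ε ∧ ‖y - x - t • u‖ < σ * ‖y - x‖ := by
  have hne : ((fun t : ℝ => t • u) '' Set.Icc 0 ε).Nonempty :=
    ⟨(0:ℝ) • u, ⟨0, ⟨le_rfl, hε⟩, rfl⟩⟩
  constructor
  · rintro ⟨h1, h2⟩
    refine ⟨h1, ?_⟩
    obtain ⟨z, ⟨t, ht, rfl⟩, hz⟩ := (Metric.infDist_lt_iff hne).1 h2
    exact ⟨t, ht.1, ht.2, by rwa [dist_eq_norm] at hz⟩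
  · rintro ⟨h1, t, ht0, htε, ht⟩
    refine ⟨h1, lt_of_le_of_lt ?_ ht⟩
    have : dist (y - x) (t • u) = ‖y - x - t • u‖ := dist_eq_norm _ _
    exact this ▸ Metric.infDist_le_dist_of_mem ⟨t, ⟨ht0, htε⟩, rfl⟩

lemma dirCone_mono {x u : EuclideanSpace ℝ (Fin n)} {ε σ ε' σ' : ℝ} (hε : 0 ≤ ε)
    (hee : ε ≤ ε') (hss : σ ≤ σ') : dirCone x u ε σ ⊆ dirCone x u ε' σ' := by
  rintro y ⟨h1, h2⟩
  refine ⟨h1, lt_of_le_of_lt ?_ (lt_of_lt_of_le h2 ?_)⟩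
  · exact Metric.infDist_le_infDist_of_subset
      (Set.image_mono (Set.Icc_subset_Icc le_rfl hee)) ⟨(0:ℝ) • u, ⟨0, ⟨le_rfl, hε⟩, rfl⟩⟩
  · exact mul_le_mul_of_nonneg_right hss (norm_nonneg _)

lemma norm_lt_of_mem_dirCone {x u y : EuclideanSpace ℝ (Fin n)} {ε σ : ℝ} (hu : ‖u‖ = 1)
    (hε : 0 ≤ ε) (hσ : σ < 1) (hy : y ∈ dirCone x u ε σ) : (1 - σ) * ‖y - x‖ < ε := by
  obtain ⟨-, t, ht0, htε, ht⟩ := (mem_dirCone_iff hε).1 hy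
  have h1 : ‖y - x‖ - t ≤ ‖y - x - t • u‖ := by
    have := norm_sub_norm_le (y - x) (t • u)
    rwa [norm_smul, hu, mul_one, Real.norm_eq_abs, abs_of_nonneg ht0] at this
  nlinarith [norm_nonneg (y - x)]

lemma dirFilter_eq_generate (x u : EuclideanSpace ℝ (Fin n)) :
    dirFilter x u = Filter.generate
      {V | ∃ ε > (0:ℝ), ∃ σ ∈ Set.Ioo (0:ℝ) 1, V = dirCone x u ε σ} := rfl

lemma exists_dirCone_subset_sInter (x u : EuclideanSpace ℝ (Fin n)) {T : Set (Set (EuclideanSpace ℝ (Fin n)))}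
    (hfin : T.Finite)
    (hTS : T ⊆ {V | ∃ ε > (0:ℝ), ∃ σ ∈ Set.Ioo (0:ℝ) 1, V = dirCone x u ε σ}) :
    ∃ ε σ : ℝ, 0 < ε ∧ 0 < σ ∧ σ < 1 ∧ dirCone x u ε σ ⊆ ⋂₀ T := by
  revert hTS
  refine Set.Finite.induction_on T hfin (fun _ => ⟨1, 1/2, one_pos, by norm_num, by norm_num, by simp⟩) ?_
  intro a s ha hs ih hTS
  obtain ⟨ε₁, hε₁, σ₁, hσ₁, rfl⟩ := hTS (Set.mem_insert _ _)
  obtain ⟨ε₂, σ₂, hε₂, hσ₂0, hσ₂1, hsub⟩ := ih fun V hV => hTS (Set.mem_insert_of_mem _ hV)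
  refine ⟨min ε₁ ε₂, min σ₁ σ₂, lt_min hε₁ hε₂, lt_min hσ₁.1 hσ₂0,
    lt_of_le_of_lt (min_le_right _ _) hσ₂1, ?_⟩
  rw [Set.sInter_insert]
  exact Set.subset_inter
    (dirCone_mono (le_min hε₁.le hε₂.le) (min_le_left _ _) (min_le_left _ _))
    (Set.Subset.trans
      (dirCone_mono (le_min hε₁.le hε₂.le) (min_le_right _ _) (min_le_right _ _)) hsub)

lemma dirFilter_hasBasis (x u : EuclideanSpace ℝ (Fin n)) :
    (dirFilter x u).HasBasis (fun p : ℝ × ℝ => 0 < p.1 ∧ 0 < p.2 ∧ p.2 < 1)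
      (fun p => dirCone x u p.1 p.2) := by
  constructor
  intro t
  rw [dirFilter_eq_generate, Filter.mem_generate_iff]
  constructor
  · rintro ⟨T, hTS, hTfin, hTt⟩
    obtain ⟨ε, σ, h1, h2, h3, h4⟩ := exists_dirCone_subset_sInter x u hTfin hTS
    exact ⟨(ε, σ), ⟨h1, h2, h3⟩, h4.trans hTt⟩
  · rintro ⟨⟨ε, σ⟩, ⟨h1, h2, h3⟩, hsub⟩
    exact ⟨{dirCone x u ε σ}, by
      simp only [Set.singleton_subset_iff]; exact ⟨ε, h1, σ, ⟨h2, h3⟩, rfl⟩,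
      Set.finite_singleton _, by simpa using hsub⟩

lemma exists_preimage_of_boundary (f : EuclideanSpace ℝ (Fin n) → EuclideanSpace ℝ (Fin n))
    (f' : EuclideanSpace ℝ (Fin n) →
      EuclideanSpace ℝ (Fin n) →L[ℝ] EuclideanSpace ℝ (Fin n))
    (hf : ∀ y, HasFDerivAt f (f' y) y)
    (hinv : ∀ y, ∃ g : EuclideanSpace ℝ (Fin n) ≃L[ℝ] EuclideanSpace ℝ (Fin n),
      (g : EuclideanSpace ℝ (Fin n) →L[ℝ] EuclideanSpace ℝ (Fin n)) = f' y)
    (x z : EuclideanSpace ℝ (Fin n)) {r : ℝ} (hr : 0 < r)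
    (hbd : ∀ y, dist y x = r → ‖f x - z‖ < ‖f y - z‖) :
    ∃ y, dist y x < r ∧ f y = z := by
  have hdiff : Differentiable ℝ f := fun y => (hf y).differentiableAt
  set φ : EuclideanSpace ℝ (Fin n) → ℝ := fun y => ‖f y - z‖ ^ 2 with hφ
  have hφc : Continuous φ := ((hdiff.continuous.sub continuous_const).norm.pow 2)
  obtain ⟨y₀, hy₀mem, hy₀min⟩ := (isCompact_closedBall x r).exists_isMinOn
    ⟨x, mem_closedBall_self hr.le⟩ hφc.continuousOn
  have hy₀ball : dist y₀ x < r := by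
    rcases lt_or_eq_of_le (mem_closedBall.1 hy₀mem) with h | h
    · exact h
    · exfalso
      have h1 : φ y₀ ≤ φ x := hy₀min (mem_closedBall_self hr.le)
      have h2 : ‖f x - z‖ < ‖f y₀ - z‖ := hbd y₀ h
      have h3 : φ x < φ y₀ := by
        simp only [hφ]
        exact pow_lt_pow_left₀ h2 (norm_nonneg _) (by norm_num)
      exact absurd h1 (not_le.2 h3)
  have hloc : IsLocalMin φ y₀ := hy₀min.isLocalMin
    (mem_nhds_iff.2 ⟨ball x r, ball_subset_closedBall, isOpen_ball, mem_ball.2 hy₀ball⟩)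
  have hD : HasFDerivAt φ (2 • (innerSL ℝ (f y₀ - z)).comp (f' y₀)) y₀ :=
    ((hf y₀).sub_const z).norm_sq
  have hzero := hloc.hasFDerivAt_eq_zero hD
  obtain ⟨g, hg⟩ := hinv y₀
  have hval : (2 • (innerSL ℝ (f y₀ - z)).comp (f' y₀)) (g.symm (f y₀ - z)) = 0 := by
    rw [hzero]; rfl
  simp only [ContinuousLinearMap.smul_apply, ContinuousLinearMap.coe_comp',
    Function.comp_apply, innerSL_apply_apply] at hval
  rw [← hg] at hval
  simp only [ContinuousLinearEquiv.coe_coe, ContinuousLinearEquiv.apply_symm_apply] at hval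
  have : f y₀ - z = 0 := by
    have h2 : (inner ℝ (f y₀ - z) (f y₀ - z) : ℝ) = 0 := by
      have := hval
      simpa [two_smul] using this
    exact inner_self_eq_zero.1 h2
  exact ⟨y₀, hy₀ball, by rwa [sub_eq_zero] at this⟩

set_option maxHeartbeats 1000000 in
set_option synthInstance.maxHeartbeats 100000 in
lemma forward_cone (f : EuclideanSpace ℝ (Fin n) → EuclideanSpace ℝ (Fin n))
    (A : EuclideanSpace ℝ (Fin n) ≃L[ℝ] EuclideanSpace ℝ (Fin n))
    (x u : EuclideanSpace ℝ (Fin n)) (hu : ‖u‖ = 1)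
    (hfx : HasFDerivAt f (A : EuclideanSpace ℝ (Fin n) →L[ℝ] EuclideanSpace ℝ (Fin n)) x)
    {ε' σ' : ℝ} (hε' : 0 < ε') (hσ'0 : 0 < σ') (hσ'1 : σ' < 1) :
    ∃ ε σ : ℝ, 0 < ε ∧ 0 < σ ∧ σ < 1 ∧
      ∀ y ∈ dirCone x u ε σ, f y ∈ dirCone (f x) (‖A u‖⁻¹ • A u) ε' σ' := by
  set a : ℝ := ‖(A : EuclideanSpace ℝ (Fin n) →L[ℝ] EuclideanSpace ℝ (Fin n))‖ with ha_def
  set c : ℝ :=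
    ‖(A.symm : EuclideanSpace ℝ (Fin n) →L[ℝ] EuclideanSpace ℝ (Fin n))‖ with hc_def
  have hwc : ∀ w, ‖w‖ ≤ c * ‖A w‖ := fun w => by
    have h := (A.symm : EuclideanSpace ℝ (Fin n) →L[ℝ]
      EuclideanSpace ℝ (Fin n)).le_opNorm (A w)
    simpa using h
  have hwa : ∀ w : EuclideanSpace ℝ (Fin n), ‖A w‖ ≤ a * ‖w‖ := fun w =>
    (A : EuclideanSpace ℝ (Fin n) →L[ℝ] EuclideanSpace ℝ (Fin n)).le_opNorm w
  have h1 : (1:ℝ) ≤ c * ‖A u‖ := by have := hwc u; rwa [hu] at this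
  have hc0 : 0 ≤ c := norm_nonneg _
  have hc : 0 < c := by nlinarith [norm_nonneg (A u)]
  have hAu : (0:ℝ) < ‖A u‖ := by nlinarith
  have hAua : ‖A u‖ ≤ a := by have := hwa u; rwa [hu, mul_one] at this
  have ha : 0 < a := lt_of_lt_of_le hAu hAua
  -- choose δ and get the ball radius
  set δ : ℝ := min (σ' / (8*c)) (1 / (2*c)) with hδ_def
  have hδ : 0 < δ := lt_min (by positivity) (by positivity)
  have hδ8 : δ * (8*c) ≤ σ' := (le_div_iff₀ (by positivity)).1 (min_le_left _ _)
  have hδ2 : δ * (2*c) ≤ 1 := (le_div_iff₀ (by positivity)).1 (min_le_right _ _)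
  have hlo := hfx.isLittleO
  rw [Asymptotics.isLittleO_iff] at hlo
  obtain ⟨r, hr, hball⟩ := Metric.eventually_nhds_iff.1 (hlo hδ)
  set σ : ℝ := min (σ' / (8*a*c)) (1/2) with hσ_def
  have hσ0 : 0 < σ := lt_min (by positivity) (by norm_num)
  have hσ8 : σ * (8*a*c) ≤ σ' := (le_div_iff₀ (by positivity)).1 (min_le_left _ _)
  have hσh : σ ≤ 1/2 := min_le_right _ _
  set ε : ℝ := min (r/4) (ε'/a) with hε_def
  have hε : 0 < ε := lt_min (by positivity) (by positivity)
  refine ⟨ε, σ, hε, hσ0, lt_of_le_of_lt hσh (by norm_num), fun y hy => ?_⟩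
  obtain ⟨hyx, t, ht0, htε, htlt⟩ := (mem_dirCone_iff hε.le).1 hy
  have hwlt : ‖y - x‖ < 2*ε := by
    have := norm_lt_of_mem_dirCone hu hε.le (lt_of_le_of_lt hσh (by norm_num)) hy
    nlinarith [norm_nonneg (y - x)]
  have hwr : dist y x < r := by
    rw [dist_eq_norm]
    have : ε ≤ r/4 := min_le_left _ _
    nlinarith
  have he : ‖f y - f x - A (y - x)‖ ≤ δ * ‖y - x‖ := hball hwr
  have h3 : ‖A (y - x)‖ ≤ ‖f y - f x‖ + δ * ‖y - x‖ := by
    have heq : A (y - x) = (f y - f x) - (f y - f x - A (y - x)) := by abel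
    rw [heq]
    exact le_trans (norm_sub_le _ _) (by linarith)
  have hlow : ‖y - x‖ ≤ 2*c*‖f y - f x‖ := by
    nlinarith [hwc (y - x), mul_le_mul_of_nonneg_left h3 hc.le, norm_nonneg (y - x),
      norm_nonneg (f y - f x)]
  have hw0 : 0 < ‖y - x‖ := norm_pos_iff.2 (sub_ne_zero.2 hyx)
  have hfne0 : 0 < ‖f y - f x‖ := by nlinarith
  have hfne : f y ≠ f x := sub_ne_zero.1 (norm_pos_iff.1 hfne0)
  rw [mem_dirCone_iff hε'.le]
  refine ⟨hfne, t * ‖A u‖, by positivity, ?_, ?_⟩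
  · have hεa : ε * a ≤ ε' := (le_div_iff₀ ha).1 (min_le_right _ _)
    nlinarith [mul_le_mul htε hAua (norm_nonneg (A u)) (le_trans ht0 htε)]
  · have hsmul : (t * ‖A u‖) • (‖A u‖⁻¹ • A u) = t • A u := by
      rw [smul_smul, mul_assoc, mul_inv_cancel₀ hAu.ne', mul_one]
    rw [hsmul]
    have hkey : ‖f y - f x - t • A u‖ ≤ δ * ‖y - x‖ + a * ‖y - x - t • u‖ := by
      have heq : f y - f x - t • A u
          = (f y - f x - A (y - x)) + A ((y - x) - t • u) := by
        simp only [map_sub, map_smul]; abel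
      rw [heq]
      exact le_trans (norm_add_le _ _) (add_le_add he (hwa _))
    have h5 : a * ‖y - x - t • u‖ < a * (σ * ‖y - x‖) :=
      mul_lt_mul_of_pos_left htlt ha
    nlinarith [mul_le_mul_of_nonneg_left hlow hδ.le,
      mul_le_mul_of_nonneg_left hlow (mul_nonneg (mul_nonneg ha.le hσ0.le) (by norm_num : (0:ℝ) ≤ 1)),
      mul_le_mul_of_nonneg_right hδ8 hfne0.le,
      mul_le_mul_of_nonneg_right hσ8 hfne0.le,
      mul_le_mul_of_nonneg_left hlow (mul_nonneg ha.le hσ0.le)]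

set_option maxHeartbeats 1000000 in
set_option synthInstance.maxHeartbeats 100000 in
lemma backward_cone (f : EuclideanSpace ℝ (Fin n) → EuclideanSpace ℝ (Fin n))
    (f' : EuclideanSpace ℝ (Fin n) →
      EuclideanSpace ℝ (Fin n) →L[ℝ] EuclideanSpace ℝ (Fin n))
    (hf : ∀ y, HasFDerivAt f (f' y) y)
    (hinv : ∀ y, ∃ g : EuclideanSpace ℝ (Fin n) ≃L[ℝ] EuclideanSpace ℝ (Fin n),
      (g : EuclideanSpace ℝ (Fin n) →L[ℝ] EuclideanSpace ℝ (Fin n)) = f' y)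
    (A : EuclideanSpace ℝ (Fin n) ≃L[ℝ] EuclideanSpace ℝ (Fin n))
    (x u : EuclideanSpace ℝ (Fin n)) (hu : ‖u‖ = 1)
    (hfx : HasFDerivAt f (A : EuclideanSpace ℝ (Fin n) →L[ℝ] EuclideanSpace ℝ (Fin n)) x)
    {ε σ : ℝ} (hε : 0 < ε) (hσ0 : 0 < σ) (hσ1 : σ < 1) :
    ∃ ε' σ' : ℝ, 0 < ε' ∧ 0 < σ' ∧ σ' < 1 ∧
      ∀ z ∈ dirCone (f x) (‖A u‖⁻¹ • A u) ε' σ', ∃ y ∈ dirCone x u ε σ, f y = z := by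
  set a : ℝ := ‖(A : EuclideanSpace ℝ (Fin n) →L[ℝ] EuclideanSpace ℝ (Fin n))‖ with ha_def
  set c : ℝ :=
    ‖(A.symm : EuclideanSpace ℝ (Fin n) →L[ℝ] EuclideanSpace ℝ (Fin n))‖ with hc_def
  have hwc : ∀ w, ‖w‖ ≤ c * ‖A w‖ := fun w => by
    have h := (A.symm : EuclideanSpace ℝ (Fin n) →L[ℝ]
      EuclideanSpace ℝ (Fin n)).le_opNorm (A w)
    simpa using h
  have hsc : ∀ w : EuclideanSpace ℝ (Fin n), ‖A.symm w‖ ≤ c * ‖w‖ := fun w =>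
    (A.symm : EuclideanSpace ℝ (Fin n) →L[ℝ] EuclideanSpace ℝ (Fin n)).le_opNorm w
  have hwa : ∀ w : EuclideanSpace ℝ (Fin n), ‖A w‖ ≤ a * ‖w‖ := fun w =>
    (A : EuclideanSpace ℝ (Fin n) →L[ℝ] EuclideanSpace ℝ (Fin n)).le_opNorm w
  have h1 : (1:ℝ) ≤ c * ‖A u‖ := by have := hwc u; rwa [hu] at this
  have hc0 : 0 ≤ c := norm_nonneg _
  have hc : 0 < c := by nlinarith [norm_nonneg (A u)]
  have hAu : (0:ℝ) < ‖A u‖ := by nlinarith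
  have hAua : ‖A u‖ ≤ a := by have := hwa u; rwa [hu, mul_one] at this
  have ha : 0 < a := lt_of_lt_of_le hAu hAua
  have hAuinv : ‖A u‖⁻¹ ≤ c := by
    have h2 := mul_le_mul_of_nonneg_left h1 (inv_nonneg.2 hAu.le)
    have h3 : ‖A u‖⁻¹ * (c * ‖A u‖) = c := by field_simp
    rw [mul_one, h3] at h2
    exact h2
  have hvnorm : ‖(‖A u‖⁻¹ • A u)‖ = 1 := by
    rw [norm_smul, Real.norm_eq_abs, abs_of_nonneg (inv_nonneg.2 hAu.le),
      inv_mul_cancel₀ hAu.ne']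
  -- choose δ and the radius on which the derivative approximation is good
  set δ : ℝ := min (min (σ / (4*c*(a+1))) (1 / (2*c))) 1 with hδ_def
  have hδ : 0 < δ := lt_min (lt_min (by positivity) (by positivity)) one_pos
  have hδ4 : δ * (4*c*(a+1)) ≤ σ :=
    (le_div_iff₀ (by positivity)).1 ((min_le_left _ _).trans (min_le_left _ _))
  have hδ2 : δ * (2*c) ≤ 1 :=
    (le_div_iff₀ (by positivity)).1 ((min_le_left _ _).trans (min_le_right _ _))
  have hδ1 : δ ≤ 1 := min_le_right _ _
  have hlo := hfx.isLittleO
  rw [Asymptotics.isLittleO_iff] at hlo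
  obtain ⟨r, hr, hball⟩ := Metric.eventually_nhds_iff.1 (hlo hδ)
  -- choose the output cone parameters
  set σ' : ℝ := min (σ / (4*c*(a+1))) (1/2) with hσ'_def
  have hσ'0 : 0 < σ' := lt_min (by positivity) (by norm_num)
  have hσ'4 : σ' * (4*c*(a+1)) ≤ σ := (le_div_iff₀ (by positivity)).1 (min_le_left _ _)
  have hσ'h : σ' ≤ 1/2 := min_le_right _ _
  set ε' : ℝ := min (ε/c) (r/(64*c)) with hε'_def
  have hε'pos : 0 < ε' := lt_min (by positivity) (by positivity)
  have hε'c : ε' * c ≤ ε := (le_div_iff₀ hc).1 (min_le_left _ _)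
  have hε'r : ε' * (64*c) ≤ r := (le_div_iff₀ (by positivity)).1 (min_le_right _ _)
  refine ⟨ε', σ', hε'pos, hσ'0, lt_of_le_of_lt hσ'h (by norm_num), fun z hz => ?_⟩
  obtain ⟨hzfx, t', ht'0, ht'ε', ht'lt⟩ := (mem_dirCone_iff hε'pos.le).1 hz
  have hzbd : ‖z - f x‖ < 2*ε' := by
    have := norm_lt_of_mem_dirCone hvnorm hε'pos.le (lt_of_le_of_lt hσ'h (by norm_num)) hz
    nlinarith [norm_nonneg (z - f x)]
  have hzr : ‖z - f x‖ * (16*c) < r := by nlinarith [norm_nonneg (z - f x)]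
  -- local surjectivity on the ball of radius r/2
  have hbd : ∀ y, dist y x = r/2 → ‖f x - z‖ < ‖f y - z‖ := by
    intro y hy
    have hdr : dist y x < r := by rw [hy]; linarith
    have he : ‖f y - f x - A (y - x)‖ ≤ δ * ‖y - x‖ := hball hdr
    have hwy : ‖y - x‖ = r/2 := by rw [← dist_eq_norm]; exact hy
    have h3 : ‖A (y - x)‖ ≤ ‖f y - f x‖ + δ * ‖y - x‖ := by
      have heq : A (y - x) = (f y - f x) - (f y - f x - A (y - x)) := by abel
      rw [heq]
      exact le_trans (norm_sub_le _ _) (by linarith)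
    have hlow : ‖y - x‖ ≤ 2*c*‖f y - f x‖ := by
      nlinarith [hwc (y - x), mul_le_mul_of_nonneg_left h3 hc.le, norm_nonneg (y - x),
        norm_nonneg (f y - f x)]
    have h6 : ‖f y - f x‖ ≤ ‖f y - z‖ + ‖z - f x‖ := by
      have := dist_triangle (f y) z (f x)
      simpa [dist_eq_norm] using this
    have h5 : ‖f x - z‖ = ‖z - f x‖ := norm_sub_rev _ _
    rw [h5]
    nlinarith [norm_nonneg (z - f x), norm_nonneg (f y - z), norm_nonneg (f y - f x)]
  obtain ⟨y, hyball, hyz⟩ :=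
    exists_preimage_of_boundary f f' hf hinv x z (by positivity) hbd
  have hyx : y ≠ x := by
    intro hxy
    rw [hxy] at hyz
    exact hzfx (hyz ▸ rfl)
  have hdr : dist y x < r := by linarith [hyball]
  have he : ‖f y - f x - A (y - x)‖ ≤ δ * ‖y - x‖ := hball hdr
  rw [hyz] at he
  have hw0 : 0 < ‖y - x‖ := norm_pos_iff.2 (sub_ne_zero.2 hyx)
  -- the preimage lies in the required cone
  refine ⟨y, ?_, hyz⟩
  rw [mem_dirCone_iff hε.le]
  refine ⟨hyx, t' * ‖A u‖⁻¹, by positivity, ?_, ?_⟩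
  · calc t' * ‖A u‖⁻¹ ≤ ε' * c :=
          mul_le_mul ht'ε' hAuinv (inv_nonneg.2 hAu.le) hε'pos.le
      _ ≤ ε := hε'c
  · -- main estimate
    have hident : y - x - (t' * ‖A u‖⁻¹) • u
        = A.symm ((z - f x - t' • (‖A u‖⁻¹ • A u)) - (z - f x - A (y - x))) := by
      have e1 : (z - f x - t' • (‖A u‖⁻¹ • A u)) - (z - f x - A (y - x))
          = A (y - x) - t' • (‖A u‖⁻¹ • A u) := by abel
      rw [e1, map_sub, map_smul, map_smul, A.symm_apply_apply, A.symm_apply_apply,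
        smul_smul]
    have hest : ‖y - x - (t' * ‖A u‖⁻¹) • u‖
        ≤ c * (‖z - f x - t' • (‖A u‖⁻¹ • A u)‖ + ‖z - f x - A (y - x)‖) := by
      rw [hident]
      refine le_trans (hsc _) (mul_le_mul_of_nonneg_left ?_ hc0)
      exact norm_sub_le _ _
    have hhbd : ‖z - f x‖ ≤ (a+1) * ‖y - x‖ := by
      have heq : z - f x = A (y - x) + (z - f x - A (y - x)) := by abel
      calc ‖z - f x‖ ≤ ‖A (y - x)‖ + ‖z - f x - A (y - x)‖ := by
            conv_lhs => rw [heq]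
            exact norm_add_le _ _
        _ ≤ a * ‖y - x‖ + δ * ‖y - x‖ := add_le_add (hwa _) he
        _ ≤ (a+1) * ‖y - x‖ := by nlinarith
    have hP0 : (0:ℝ) ≤ ‖z - f x - t' • (‖A u‖⁻¹ • A u)‖ := norm_nonneg _
    have hZ0 : (0:ℝ) ≤ ‖z - f x‖ := norm_nonneg _
    nlinarith [ht'lt, he, hest, hP0, hZ0,
      mul_le_mul_of_nonneg_left hhbd (mul_nonneg hc0 hσ'0.le),
      mul_le_mul_of_nonneg_right hσ'4 hw0.le, mul_le_mul_of_nonneg_right hδ4 hw0.le,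
      mul_le_mul_of_nonneg_left ht'lt.le hc0, mul_le_mul_of_nonneg_left he hc0,
      mul_pos hσ0 hw0]

end Aux

/-- a differentiable map with everywhere invertible derivative is
topologically derivable: it pushes μ_{x,u} to μ_{f x, Df(x)u/‖Df(x)u‖}. -/
theorem diffeo_topologically_derivable {n : ℕ}
    (f : EuclideanSpace ℝ (Fin n) → EuclideanSpace ℝ (Fin n))
    (f' : EuclideanSpace ℝ (Fin n) →
      EuclideanSpace ℝ (Fin n) →L[ℝ] EuclideanSpace ℝ (Fin n))
    (hf : ∀ x, HasFDerivAt f (f' x) x)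
    (hinv : ∀ x, ∃ g : EuclideanSpace ℝ (Fin n) ≃L[ℝ] EuclideanSpace ℝ (Fin n),
      (g : EuclideanSpace ℝ (Fin n) →L[ℝ] EuclideanSpace ℝ (Fin n)) = f' x)
    (x u : EuclideanSpace ℝ (Fin n)) (hu : ‖u‖ = 1) :
    Filter.map f (dirFilter x u) =
      dirFilter (f x) (‖f' x u‖⁻¹ • f' x u) := by
  obtain ⟨A, hA⟩ := hinv x
  have hfx : HasFDerivAt f
      (A : EuclideanSpace ℝ (Fin n) →L[ℝ] EuclideanSpace ℝ (Fin n)) x := by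
    rw [hA]; exact hf x
  have hAu : f' x u = A u := by rw [← hA]; rfl
  rw [hAu]
  apply le_antisymm
  · rw [Filter.HasBasis.le_basis_iff ((dirFilter_hasBasis x u).map f)
      (dirFilter_hasBasis (f x) (‖A u‖⁻¹ • A u))]
    rintro ⟨ε', σ'⟩ ⟨hε', hσ'0, hσ'1⟩
    obtain ⟨ε, σ, h1, h2, h3, h4⟩ := forward_cone f A x u hu hfx hε' hσ'0 hσ'1
    exact ⟨(ε, σ), ⟨h1, h2, h3⟩, Set.image_subset_iff.2 h4⟩
  · rw [Filter.HasBasis.le_basis_iff (dirFilter_hasBasis (f x) (‖A u‖⁻¹ • A u))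
      ((dirFilter_hasBasis x u).map f)]
    rintro ⟨ε, σ⟩ ⟨h1, h2, h3⟩
    obtain ⟨ε', σ', h1', h2', h3', h4'⟩ :=
      backward_cone f f' hf hinv A x u hu hfx h1 h2 h3
    refine ⟨(ε', σ'), ⟨h1', h2', h3'⟩, fun z hz => ?_⟩
    obtain ⟨y, hy, hyz⟩ := h4' z hz
    exact ⟨y, hy, hyz⟩
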